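/- Let N ≥ 2 be an integer, let p be a nonzero integer, and let d be an N-adic rational with 0 < d and d + d·N^{-p} ≤ 1. Define A_{d,p} : [0,1] → [0,1] by A_{d,p}(x) = x/N^p for 0 ≤ x ≤ d, A_{d,p}(x) = x − d + d/N^p for d ≤ x ≤ 1 − d/N^p, and A_{d,p}(x) = N^p·x + 1 − N^p for 1 − d/N^p ≤ x ≤ 1. Then A_{d,p} is a well-defined element of F(N) and has infinite order: for every integer n ≥ 1, the n-fold composition of A_{d,p} with itself is not the identity map of [0,1]. -/

import Mathlib

/-- A real number is an `N`-adic rational if it equals `k / N^m` for some `k : ℤ`, `m : ℕ`. -/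
def IsNAdic (N : ℕ) (x : ℝ) : Prop :=
  ∃ (k : ℤ) (m : ℕ), x = (k : ℝ) / (N : ℝ) ^ m

/-- Membership (as a map of `[0,1]`) in the generalized Thompson group `F(N)`:
`f 0 = 0`, `f 1 = 1`, and there is a finite partition `0 = a 0 < a 1 < ⋯ < a n = 1`
of `[0,1]` by `N`-adic rationals such that on each piece `[a i, a (i+1)]` the map `f`
is affine with slope an integer power of `N`.  (Such an `f` is automatically an
increasing piecewise-linear homeomorphism of `[0,1]` onto itself, with all
non-differentiability points `N`-adic.) -/
def InFN (N : ℕ) (f : ℝ → ℝ) : Prop :=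
  f 0 = 0 ∧ f 1 = 1 ∧
    ∃ (n : ℕ) (a : ℕ → ℝ), 0 < n ∧ a 0 = 0 ∧ a n = 1 ∧
      (∀ i < n, a i < a (i + 1)) ∧
      (∀ i ≤ n, IsNAdic N (a i)) ∧
      (∀ i < n, ∃ q : ℤ, ∀ x ∈ Set.Icc (a i) (a (i + 1)),
        f x = f (a i) + (N : ℝ) ^ q * (x - a i))

lemma isNAdic_zero (N : ℕ) : IsNAdic N 0 := ⟨0, 0, by simp⟩

lemma isNAdic_one (N : ℕ) : IsNAdic N 1 := ⟨1, 0, by simp⟩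

lemma isNAdic_sub {N : ℕ} (hN : 0 < N) {x y : ℝ} (hx : IsNAdic N x) (hy : IsNAdic N y) :
    IsNAdic N (x - y) := by
  obtain ⟨k, m, rfl⟩ := hx
  obtain ⟨l, r, rfl⟩ := hy
  have hN' : (N : ℝ) ≠ 0 := by positivity
  refine ⟨k * N ^ r - l * N ^ m, m + r, ?_⟩
  push_cast
  field_simp
  ring

lemma isNAdic_mul_zpow {N : ℕ} (hN : 0 < N) {x : ℝ} (hx : IsNAdic N x) (q : ℤ) :
    IsNAdic N (x * (N : ℝ) ^ q) := by
  obtain ⟨k, m, rfl⟩ := hx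
  have hN' : (N : ℝ) ≠ 0 := by positivity
  rcases le_or_gt 0 q with h | h
  · lift q to ℕ using h
    refine ⟨k * N ^ q, m, ?_⟩
    push_cast
    rw [zpow_natCast]
    field_simp
  · obtain ⟨r, rfl⟩ : ∃ r : ℕ, q = -(r : ℤ) := ⟨q.natAbs, by omega⟩
    refine ⟨k, m + r, ?_⟩
    rw [zpow_neg, zpow_natCast, pow_add]
    field_simp

/-- For `N ≥ 2`, `p` a nonzero integer and `d` an `N`-adic rational with
`0 < d` and `d + d·N^(−p) ≤ 1`, the map `A_{d,p}` (equal to `x/N^p` on `[0,d]`, to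
`x − d + d/N^p` on `[d, 1 − d/N^p]`, and to `N^p·x + 1 − N^p` on `[1 − d/N^p, 1]`)
is a well-defined element of `F(N)` of infinite order: no positive iterate of it is
the identity of `[0,1]`. -/
theorem statement0 (N : ℕ) (hN : 2 ≤ N) (p : ℤ) (hp : p ≠ 0) (d : ℝ)
    (hd : IsNAdic N d) (hd0 : 0 < d) (hd1 : d + d * (N : ℝ) ^ (-p) ≤ 1)
    (A : ℝ → ℝ)
    (hA1 : ∀ x : ℝ, 0 ≤ x → x ≤ d → A x = x / (N : ℝ) ^ p)
    (hA2 : ∀ x : ℝ, d ≤ x → x ≤ 1 - d / (N : ℝ) ^ p → A x = x - d + d / (N : ℝ) ^ p)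
    (hA3 : ∀ x : ℝ, 1 - d / (N : ℝ) ^ p ≤ x → x ≤ 1 →
      A x = (N : ℝ) ^ p * x + 1 - (N : ℝ) ^ p) :
    InFN N A ∧ ∀ n : ℕ, 1 ≤ n → ∃ x ∈ Set.Icc (0 : ℝ) 1, A^[n] x ≠ x := by
  have hN0 : (0 : ℝ) < N := by positivity
  have hN1 : (1 : ℝ) < N := by exact_mod_cast by omega
  have hNp0 : (0 : ℝ) < (N : ℝ) ^ p := zpow_pos hN0 p
  have hNpne : ((N : ℝ) ^ p) ≠ 0 := ne_of_gt hNp0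
  have hceq : d * (N : ℝ) ^ (-p) = d / (N : ℝ) ^ p := by
    rw [zpow_neg, div_eq_mul_inv]
  have hc0 : 0 < d / (N : ℝ) ^ p := div_pos hd0 hNp0
  have hdc1 : d + d / (N : ℝ) ^ p ≤ 1 := by rw [← hceq]; exact hd1
  have hNpc : (N : ℝ) ^ p * (d / (N : ℝ) ^ p) = d := by field_simp
  have hA0 : A 0 = 0 := by
    have := hA1 0 le_rfl hd0.le
    simpa using this
  have hA1' : A 1 = 1 := by
    have := hA3 1 (by linarith) le_rfl
    rw [this]; ring
  have hAd : A d = d / (N : ℝ) ^ p := hA1 d hd0.le le_rfl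
  have hd_le : d ≤ 1 - d / (N : ℝ) ^ p := by linarith
  constructor
  · refine ⟨hA0, hA1', ?_⟩
    rcases eq_or_lt_of_le hd_le with hdeg | hnd
    · -- degenerate: d = 1 - d/N^p, two pieces
      refine ⟨2, fun i => match i with | 0 => 0 | 1 => d | _ => 1, by norm_num,
        rfl, rfl, ?_, ?_, ?_⟩
      · intro i hi
        interval_cases i
        · show (0 : ℝ) < d; exact hd0
        · show d < 1; linarith
      · intro i hi
        interval_cases i
        · exact isNAdic_zero N
        · exact hd
        · exact isNAdic_one N
      · intro i hi
        interval_cases i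
        · refine ⟨-p, fun x hx => ?_⟩
          obtain ⟨hx1, hx2⟩ := hx
          show A x = A 0 + (N : ℝ) ^ (-p) * (x - 0)
          rw [hA1 x hx1 hx2, hA0, zpow_neg]
          ring
        · refine ⟨p, fun x hx => ?_⟩
          obtain ⟨hx1, hx2⟩ := hx
          show A x = A d + (N : ℝ) ^ p * (x - d)
          rw [hA3 x (by have hx1' : d ≤ x := hx1; linarith [hx1', hdeg]) hx2, hAd]
          nlinarith [hNpc, hdeg]
    · -- nondegenerate: three pieces
      refine ⟨3, fun i => match i with
          | 0 => 0 | 1 => d | 2 => 1 - d / (N : ℝ) ^ p | _ => 1, by norm_num,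
        rfl, rfl, ?_, ?_, ?_⟩
      · intro i hi
        interval_cases i
        · show (0 : ℝ) < d; exact hd0
        · show d < 1 - d / (N : ℝ) ^ p; exact hnd
        · show 1 - d / (N : ℝ) ^ p < 1; linarith
      · intro i hi
        interval_cases i
        · exact isNAdic_zero N
        · exact hd
        · show IsNAdic N (1 - d / (N : ℝ) ^ p)
          have h1 : IsNAdic N (1 - d * (N : ℝ) ^ (-p)) :=
            isNAdic_sub (by omega) (isNAdic_one N) (isNAdic_mul_zpow (by omega) hd (-p))
          rwa [hceq] at h1
        · exact isNAdic_one N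
      · intro i hi
        interval_cases i
        · refine ⟨-p, fun x hx => ?_⟩
          obtain ⟨hx1, hx2⟩ := hx
          show A x = A 0 + (N : ℝ) ^ (-p) * (x - 0)
          rw [hA1 x hx1 hx2, hA0, zpow_neg]
          ring
        · refine ⟨0, fun x hx => ?_⟩
          obtain ⟨hx1, hx2⟩ := hx
          show A x = A d + (N : ℝ) ^ (0 : ℤ) * (x - d)
          rw [hA2 x hx1 hx2, hAd, zpow_zero]
          ring
        · refine ⟨p, fun x hx => ?_⟩
          obtain ⟨hx1, hx2⟩ := hx
          show A x = A (1 - d / (N : ℝ) ^ p) + (N : ℝ) ^ p * (x - (1 - d / (N : ℝ) ^ p))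
          have hA1c : A (1 - d / (N : ℝ) ^ p) = 1 - d := by
            rw [hA2 (1 - d / (N : ℝ) ^ p) hd_le le_rfl]
            ring
          rw [hA3 x hx1 hx2, hA1c]
          nlinarith [hNpc]
  · -- infinite order
    intro n hn
    rcases hp.lt_or_gt with hpneg | hppos
    · -- p < 0 : use x₀ = 1 - d/N^p
      have hs1 : (N : ℝ) ^ p < 1 := zpow_lt_one_of_neg₀ hN1 hpneg
      have key : ∀ m : ℕ, A^[m] (1 - d / (N : ℝ) ^ p) =
          1 - d / (N : ℝ) ^ p * ((N : ℝ) ^ p) ^ m := by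
        intro m
        induction m with
        | zero => simp
        | succ m ih =>
          rw [Function.iterate_succ_apply', ih]
          have hsm : ((N : ℝ) ^ p) ^ m ≤ 1 := pow_le_one₀ hNp0.le hs1.le
          have hsm0 : 0 < ((N : ℝ) ^ p) ^ m := pow_pos hNp0 m
          have h1 : 1 - d / (N : ℝ) ^ p ≤ 1 - d / (N : ℝ) ^ p * ((N : ℝ) ^ p) ^ m := by
            nlinarith
          have h2 : 1 - d / (N : ℝ) ^ p * ((N : ℝ) ^ p) ^ m ≤ 1 := by nlinarith
          rw [hA3 _ h1 h2]
          ring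
      refine ⟨1 - d / (N : ℝ) ^ p, ⟨by linarith, by linarith⟩, ?_⟩
      rw [key n]
      have hsn : ((N : ℝ) ^ p) ^ n < 1 := pow_lt_one₀ hNp0.le hs1 (by omega)
      have hlt : d / (N : ℝ) ^ p * ((N : ℝ) ^ p) ^ n < d / (N : ℝ) ^ p :=
        mul_lt_of_lt_one_right hc0 hsn
      intro h
      linarith
    · -- p > 0 : use x₀ = d
      have hr1 : (N : ℝ) ^ (-p) < 1 := zpow_lt_one_of_neg₀ hN1 (by omega)
      have hr0 : (0 : ℝ) < (N : ℝ) ^ (-p) := zpow_pos hN0 _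
      have hrc : ∀ y : ℝ, y / (N : ℝ) ^ p = y * (N : ℝ) ^ (-p) := by
        intro y; rw [zpow_neg, div_eq_mul_inv]
      have key : ∀ m : ℕ, A^[m] d = d * ((N : ℝ) ^ (-p)) ^ m := by
        intro m
        induction m with
        | zero => simp
        | succ m ih =>
          rw [Function.iterate_succ_apply', ih]
          have hrm : ((N : ℝ) ^ (-p)) ^ m ≤ 1 := pow_le_one₀ hr0.le hr1.le
          have hrm0 : 0 < ((N : ℝ) ^ (-p)) ^ m := pow_pos hr0 m
          have h1 : 0 ≤ d * ((N : ℝ) ^ (-p)) ^ m := by positivity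
          have h2 : d * ((N : ℝ) ^ (-p)) ^ m ≤ d := by nlinarith
          rw [hA1 _ h1 h2, hrc]
          ring
      refine ⟨d, ⟨hd0.le, by linarith⟩, ?_⟩
      rw [key n]
      have hrn : ((N : ℝ) ^ (-p)) ^ n < 1 := pow_lt_one₀ hr0.le hr1 (by omega)
      have hlt : d * ((N : ℝ) ^ (-p)) ^ n < d := mul_lt_of_lt_one_right hd0 hrn
      intro h
      linarith
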